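/- Let X be the solution of the recursive distributional equation X =_d √U·X + √U·(1−√U), and let f be the version of its Lebesgue density satisfying the integral equation f(t) = 2·∫_{2√t−1}^{t} g(x,t)·f(x) dx + ∫_{t}^{1} (g(x,t) − 1)·f(x) dx for all t ∈ [0,1] and f = 0 outside [0,1], where g(x,t) := (1+x)/√((1+x)² − 4t). Then f is bounded with sup_{t ∈ ℝ} f(t) ≤ 109. -/

import Mathlib

open MeasureTheory
open scoped ENNReal

noncomputable section

/-- The uniform distribution on `[0,1]`. -/
def unif : Measure ℝ := volume.restrict (Set.Icc 0 1)

/-- The map `(x, u) ↦ √u·x + √u·(1 − √u)`. -/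
def rdeMap (q : ℝ × ℝ) : ℝ :=
  Real.sqrt q.2 * q.1 + Real.sqrt q.2 * (1 - Real.sqrt q.2)

/-- `μ` is a (probability) solution of the recursive distributional equation
`X =_d √U·X + √U·(1 − √U)` with `X, U` independent and `U` uniform on `[0,1]`. -/
def IsRDESolution (μ : Measure ℝ) : Prop :=
  IsProbabilityMeasure μ ∧ Measure.map rdeMap (μ.prod unif) = μ

/-- The function `g(x,t) = (1+x)/√((1+x)² − 4t)`. -/
def gdens (x t : ℝ) : ℝ := (1 + x) / Real.sqrt ((1 + x) ^ 2 - 4 * t)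

lemma gdens_meas (t : ℝ) : Measurable fun x => gdens x t := by
  unfold gdens
  exact (measurable_const.add measurable_id).div
    (Real.continuous_sqrt.measurable.comp (by fun_prop))

lemma gdens_meas2 : Measurable fun p : ℝ × ℝ => gdens p.2 p.1 := by
  unfold gdens
  exact (measurable_const.add measurable_snd).div
    (Real.continuous_sqrt.measurable.comp (by fun_prop))

lemma gdens_nonneg {x t : ℝ} (hx : -1 ≤ x) : 0 ≤ gdens x t :=
  div_nonneg (by linarith) (Real.sqrt_nonneg _)

lemma one_le_gdens {t x : ℝ} (ht : 0 ≤ t) (htx : t < x) (hx : x ≤ 1) : 1 ≤ gdens x t := by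
  have hd : 0 < (1 + x) ^ 2 - 4 * t := by nlinarith
  have h1 : Real.sqrt ((1 + x) ^ 2 - 4 * t) ≤ 1 + x := by
    calc Real.sqrt ((1 + x) ^ 2 - 4 * t) ≤ Real.sqrt ((1 + x) ^ 2) :=
          Real.sqrt_le_sqrt (by nlinarith)
      _ = 1 + x := Real.sqrt_sq (by linarith)
  exact (one_le_div (Real.sqrt_pos.2 hd)).2 h1

lemma ofReal_mul_le {u v : ℝ} (hv : 0 ≤ v) :
    ENNReal.ofReal (u * v) ≤ ENNReal.ofReal u * ENNReal.ofReal v := by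
  rcases le_or_gt 0 u with hu | hu
  · rw [ENNReal.ofReal_mul hu]
  · rw [ENNReal.ofReal_of_nonpos (mul_nonpos_of_nonpos_of_nonneg hu.le hv)]
    exact zero_le

lemma ofReal_intervalIntegral_le {a b : ℝ} {h : ℝ → ℝ} (hab : a ≤ b)
    (hm : Measurable h) (h0 : ∀ x ∈ Set.Ioc a b, 0 ≤ h x) :
    ENNReal.ofReal (∫ x in a..b, h x) ≤ ∫⁻ x in Set.Ioc a b, ENNReal.ofReal (h x) := by
  rw [intervalIntegral.integral_of_le hab,
    integral_eq_lintegral_of_nonneg_ae ((ae_restrict_mem measurableSet_Ioc).mono h0)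
      hm.aestronglyMeasurable]
  exact ENNReal.ofReal_toReal_le

lemma lintegral_inv_sqrt_shift {a c : ℝ} (hc : 0 < c) :
    ∫⁻ y in Set.Ioc a (a + c), ENNReal.ofReal (1 / Real.sqrt (y - a)) =
      ENNReal.ofReal (2 * Real.sqrt c) := by
  have hint0 : IntervalIntegrable (fun x : ℝ => x ^ (-(1/2) : ℝ)) volume 0 c :=
    intervalIntegral.intervalIntegrable_rpow' (by norm_num)
  have hint1 : IntervalIntegrable (fun x : ℝ => (x - a) ^ (-(1/2) : ℝ)) volume a (a + c) := by
    have := hint0.comp_sub_right a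
    simpa [add_comm] using this
  have hIoc : IntegrableOn (fun x : ℝ => (x - a) ^ (-(1/2) : ℝ)) (Set.Ioc a (a + c)) volume :=
    hint1.1
  have hcong : ∀ᵐ y ∂volume, y ∈ Set.Ioc a (a + c) →
      ENNReal.ofReal (1 / Real.sqrt (y - a)) = ENNReal.ofReal ((y - a) ^ (-(1/2) : ℝ)) := by
    filter_upwards with y hy
    congr 1
    rw [Real.rpow_neg (by linarith [hy.1] : (0:ℝ) ≤ y - a), Real.sqrt_eq_rpow, one_div]
  rw [setLIntegral_congr_fun_ae measurableSet_Ioc hcong]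
  rw [← ofReal_integral_eq_lintegral_ofReal hIoc
    ((ae_restrict_mem measurableSet_Ioc).mono (fun y hy =>
      Real.rpow_nonneg (by linarith [hy.1]) _))]
  congr 1
  rw [← intervalIntegral.integral_of_le (by linarith)]
  rw [intervalIntegral.integral_comp_sub_right (fun x : ℝ => x ^ (-(1/2) : ℝ)) a]
  simp only [sub_self, add_sub_cancel_left]
  rw [integral_rpow (Or.inl (by norm_num))]
  rw [Real.zero_rpow (by norm_num), Real.sqrt_eq_rpow]
  norm_num
  ring

lemma lintegral_inv_sqrt_reflect {b c : ℝ} (hc : 0 < c) :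
    ∫⁻ y in Set.Ioc (b - c) b, ENNReal.ofReal (1 / Real.sqrt (b - y)) =
      ENNReal.ofReal (2 * Real.sqrt c) := by
  have hint0 : IntervalIntegrable (fun x : ℝ => x ^ (-(1/2) : ℝ)) volume 0 c :=
    intervalIntegral.intervalIntegrable_rpow' (by norm_num)
  have hint1 : IntervalIntegrable (fun x : ℝ => (b - x) ^ (-(1/2) : ℝ)) volume (b - c) b := by
    have := (hint0.comp_sub_left b).symm
    simpa using this
  have hIoc : IntegrableOn (fun x : ℝ => (b - x) ^ (-(1/2) : ℝ)) (Set.Ioc (b - c) b) volume :=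
    hint1.1
  have hcong : ∀ᵐ y ∂volume, y ∈ Set.Ioc (b - c) b →
      ENNReal.ofReal (1 / Real.sqrt (b - y)) = ENNReal.ofReal ((b - y) ^ (-(1/2) : ℝ)) := by
    filter_upwards with y hy
    congr 1
    rw [Real.rpow_neg (by linarith [hy.2] : (0:ℝ) ≤ b - y), Real.sqrt_eq_rpow, one_div]
  rw [setLIntegral_congr_fun_ae measurableSet_Ioc hcong]
  rw [← ofReal_integral_eq_lintegral_ofReal hIoc
    ((ae_restrict_mem measurableSet_Ioc).mono (fun y hy => Real.rpow_nonneg (by linarith [hy.2]) _))]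
  congr 1
  rw [← intervalIntegral.integral_of_le (by linarith)]
  rw [intervalIntegral.integral_comp_sub_left (fun x : ℝ => x ^ (-(1/2) : ℝ)) b]
  simp only [sub_self, sub_sub_cancel]
  rw [integral_rpow (Or.inl (by norm_num))]
  rw [Real.zero_rpow (by norm_num), Real.sqrt_eq_rpow]
  norm_num
  ring

lemma beta_le_eight (a b : ℝ) :
    ∫⁻ y in Set.Ioo a b,
      ENNReal.ofReal (2 / Real.sqrt (y - a)) * ENNReal.ofReal (1 / Real.sqrt (b - y)) ≤ 8 := by
  rcases le_or_gt b a with h | h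
  · rw [Set.Ioo_eq_empty (by exact fun h' => absurd h (not_le.2 h'))]
    simp
  · set c : ℝ := (b - a) / 2 with hcdef
    have hc : 0 < c := by simp only [hcdef]; linarith
    have hsc : 0 < Real.sqrt c := Real.sqrt_pos.2 hc
    have hsub : Set.Ioo a b ⊆ Set.Ioc a (a + c) ∪ Set.Ioc (b - c) b := by
      intro y hy
      rcases le_or_gt y (a + c) with h' | h'
      · exact Or.inl ⟨hy.1, h'⟩
      · exact Or.inr ⟨by simp only [hcdef] at h' ⊢; linarith, hy.2.le⟩
    refine le_trans (lintegral_mono_set hsub) ?_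
    refine le_trans (lintegral_union_le _ _ _) ?_
    have piece1 : ∫⁻ y in Set.Ioc a (a + c),
        ENNReal.ofReal (2 / Real.sqrt (y - a)) * ENNReal.ofReal (1 / Real.sqrt (b - y)) ≤ 4 := by
      have hpt : ∀ᵐ y ∂(volume.restrict (Set.Ioc a (a + c))),
          ENNReal.ofReal (2 / Real.sqrt (y - a)) * ENNReal.ofReal (1 / Real.sqrt (b - y)) ≤
          ENNReal.ofReal (2 / Real.sqrt (y - a)) * ENNReal.ofReal (1 / Real.sqrt c) := by
        refine (ae_restrict_mem measurableSet_Ioc).mono (fun y hy => ?_)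
        refine mul_le_mul_right (ENNReal.ofReal_le_ofReal ?_) _
        have hby : c ≤ b - y := by simp only [hcdef] at hy ⊢; rcases hy with ⟨h1, h2⟩; linarith
        exact one_div_le_one_div_of_le hsc (Real.sqrt_le_sqrt hby)
      refine le_trans (lintegral_mono_ae hpt) ?_
      rw [lintegral_mul_const'' _ (by fun_prop)]
      have h2 : ∀ y : ℝ, ENNReal.ofReal (2 / Real.sqrt (y - a)) =
          2 * ENNReal.ofReal (1 / Real.sqrt (y - a)) := by
        intro y
        rw [show (2 : ℝ) / Real.sqrt (y - a) = 2 * (1 / Real.sqrt (y - a)) by ring,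
          ENNReal.ofReal_mul (by norm_num)]
        norm_num
      simp only [h2]
      rw [lintegral_const_mul'' _ (by fun_prop), lintegral_inv_sqrt_shift hc]
      rw [mul_assoc, ← ENNReal.ofReal_mul (by positivity)]
      calc 2 * ENNReal.ofReal (2 * Real.sqrt c * (1 / Real.sqrt c))
          = 2 * ENNReal.ofReal 2 := by
            congr 2; field_simp
        _ ≤ 4 := by rw [ENNReal.ofReal_ofNat]; norm_num
    have piece2 : ∫⁻ y in Set.Ioc (b - c) b,
        ENNReal.ofReal (2 / Real.sqrt (y - a)) * ENNReal.ofReal (1 / Real.sqrt (b - y)) ≤ 4 := by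
      have hpt : ∀ᵐ y ∂(volume.restrict (Set.Ioc (b - c) b)),
          ENNReal.ofReal (2 / Real.sqrt (y - a)) * ENNReal.ofReal (1 / Real.sqrt (b - y)) ≤
          ENNReal.ofReal (2 / Real.sqrt c) * ENNReal.ofReal (1 / Real.sqrt (b - y)) := by
        refine (ae_restrict_mem measurableSet_Ioc).mono (fun y hy => ?_)
        refine mul_le_mul_left (ENNReal.ofReal_le_ofReal ?_) _
        have hya : c ≤ y - a := by simp only [hcdef] at hy ⊢; rcases hy with ⟨h1, h2⟩; linarith
        exact div_le_div_of_nonneg_left (by norm_num) hsc (Real.sqrt_le_sqrt hya)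
      refine le_trans (lintegral_mono_ae hpt) ?_
      rw [lintegral_const_mul'' _ (by fun_prop), lintegral_inv_sqrt_reflect hc]
      rw [← ENNReal.ofReal_mul (by positivity)]
      calc ENNReal.ofReal (2 / Real.sqrt c * (2 * Real.sqrt c))
          = ENNReal.ofReal 4 := by congr 1; field_simp; ring
        _ ≤ 4 := by norm_num
    exact le_trans (add_le_add piece1 piece2) (by norm_num)

lemma gdens_le_main {t y : ℝ} (ht0 : 0 ≤ t) (hy1 : 2 * Real.sqrt t - 1 < y) (hy2 : y ≤ 1) :
    gdens y t ≤ 2 / Real.sqrt (y - (2 * Real.sqrt t - 1)) := by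
  set s : ℝ := Real.sqrt t with hs
  set a : ℝ := 2 * s - 1 with ha
  have hs0 : 0 ≤ s := Real.sqrt_nonneg t
  have hst : s ^ 2 = t := Real.sq_sqrt ht0
  have ha1 : -1 ≤ a := by simp only [ha]; linarith
  have hya : 0 < y - a := by linarith
  have hyb : 0 < y + a + 2 := by linarith
  have hden : (1 + y) ^ 2 - 4 * t = (y - a) * (y + a + 2) := by
    simp only [ha]; nlinarith [hst]
  have hy0 : 0 < 1 + y := by linarith
  have key : 1 + y ≤ 2 * Real.sqrt (y + a + 2) := by
    have h1 : (1 + y) ^ 2 ≤ 4 * (y + a + 2) := by nlinarith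
    calc 1 + y = Real.sqrt ((1 + y) ^ 2) := (Real.sqrt_sq hy0.le).symm
      _ ≤ Real.sqrt (4 * (y + a + 2)) := Real.sqrt_le_sqrt h1
      _ = 2 * Real.sqrt (y + a + 2) := by
          rw [show (4 : ℝ) * (y + a + 2) = 2 ^ 2 * (y + a + 2) by ring,
            Real.sqrt_mul (by positivity), Real.sqrt_sq (by norm_num)]
  unfold gdens
  rw [hden, Real.sqrt_mul hya.le]
  have hsy : 0 < Real.sqrt (y - a) := Real.sqrt_pos.2 hya
  have hsy2 : 0 < Real.sqrt (y + a + 2) := Real.sqrt_pos.2 hyb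
  rw [div_le_div_iff₀ (by positivity) hsy]
  have h2 : Real.sqrt (y + a + 2) * Real.sqrt (y + a + 2) = y + a + 2 :=
    Real.mul_self_sqrt hyb.le
  nlinarith [mul_le_mul_of_nonneg_right key hsy.le, hsy.le, hsy2.le]

lemma gdens_le_snd {y x : ℝ} (hx1 : x ≤ 1) (hx2 : -1 ≤ x) :
    gdens x y ≤ 1 / Real.sqrt ((1 + x) ^ 2 / 4 - y) := by
  rcases le_or_gt ((1 + x) ^ 2 - 4 * y) 0 with h | h
  · unfold gdens
    rw [Real.sqrt_eq_zero'.mpr h, div_zero]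
    positivity
  · have hb : 0 < (1 + x) ^ 2 / 4 - y := by linarith
    have h4 : (1 + x) ^ 2 - 4 * y = 2 ^ 2 * ((1 + x) ^ 2 / 4 - y) := by ring
    unfold gdens
    rw [h4, Real.sqrt_mul (by norm_num), Real.sqrt_sq (by norm_num)]
    have hs : 0 < Real.sqrt ((1 + x) ^ 2 / 4 - y) := Real.sqrt_pos.2 hb
    rw [div_le_div_iff₀ (by positivity) hs]
    nlinarith [hs.le]

lemma lt_b_of {y x : ℝ} (h : 2 * Real.sqrt y - 1 < x) : y < (1 + x) ^ 2 / 4 := by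
  have hx2 : -1 ≤ x := by have := Real.sqrt_nonneg y; linarith
  rcases le_or_gt 0 y with hy | hy
  · have h1 : Real.sqrt y < (1 + x) / 2 := by linarith
    have h2 : Real.sqrt y ^ 2 < ((1 + x) / 2) ^ 2 := by
      have := Real.sqrt_nonneg y
      nlinarith
    rw [Real.sq_sqrt hy] at h2
    calc y < ((1 + x) / 2) ^ 2 := h2
      _ = (1 + x) ^ 2 / 4 := by ring
  · calc y < 0 := hy
      _ ≤ (1 + x) ^ 2 / 4 := by positivity

lemma star {f : ℝ → ℝ} (hm : Measurable f) (h0 : ∀ x, 0 ≤ f x)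
    (heq : ∀ t ∈ Set.Icc (0 : ℝ) 1,
      f t = 2 * (∫ x in (2 * Real.sqrt t - 1)..t, gdens x t * f x)
            + ∫ x in t..(1 : ℝ), (gdens x t - 1) * f x)
    {t : ℝ} (ht0 : 0 ≤ t) (ht1 : t ≤ 1) :
    ENNReal.ofReal (f t) ≤
      2 * ∫⁻ y in Set.Ioc (2 * Real.sqrt t - 1) 1,
        ENNReal.ofReal (gdens y t) * ENNReal.ofReal (f y) := by
  set a : ℝ := 2 * Real.sqrt t - 1 with ha
  have hs0 : 0 ≤ Real.sqrt t := Real.sqrt_nonneg t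
  have hst : Real.sqrt t ^ 2 = t := Real.sq_sqrt ht0
  have hat : a ≤ t := by simp only [ha]; nlinarith
  have ha1 : -1 ≤ a := by simp only [ha]; linarith
  rw [heq t ⟨ht0, ht1⟩]
  have hA : ENNReal.ofReal (∫ x in a..t, gdens x t * f x) ≤
      ∫⁻ x in Set.Ioc a t, ENNReal.ofReal (gdens x t * f x) :=
    ofReal_intervalIntegral_le hat ((gdens_meas t).mul hm)
      (fun x hx => mul_nonneg (gdens_nonneg (by linarith [hx.1])) (h0 x))
  have hB : ENNReal.ofReal (∫ x in t..(1:ℝ), (gdens x t - 1) * f x) ≤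
      ∫⁻ x in Set.Ioc t 1, ENNReal.ofReal ((gdens x t - 1) * f x) :=
    ofReal_intervalIntegral_le ht1 (((gdens_meas t).sub measurable_const).mul hm)
      (fun x hx => mul_nonneg (by linarith [one_le_gdens ht0 hx.1 hx.2]) (h0 x))
  calc ENNReal.ofReal (2 * (∫ x in a..t, gdens x t * f x)
          + ∫ x in t..(1:ℝ), (gdens x t - 1) * f x)
      ≤ ENNReal.ofReal (2 * (∫ x in a..t, gdens x t * f x))
        + ENNReal.ofReal (∫ x in t..(1:ℝ), (gdens x t - 1) * f x) := ENNReal.ofReal_add_le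
    _ = 2 * ENNReal.ofReal (∫ x in a..t, gdens x t * f x)
        + ENNReal.ofReal (∫ x in t..(1:ℝ), (gdens x t - 1) * f x) := by
        rw [ENNReal.ofReal_mul (by norm_num)]; norm_num
    _ ≤ 2 * (∫⁻ x in Set.Ioc a t, ENNReal.ofReal (gdens x t * f x))
        + ∫⁻ x in Set.Ioc t 1, ENNReal.ofReal ((gdens x t - 1) * f x) :=
        add_le_add (mul_le_mul_right hA _) hB
    _ ≤ 2 * (∫⁻ x in Set.Ioc a t, ENNReal.ofReal (gdens x t * f x))
        + 2 * (∫⁻ x in Set.Ioc t 1, ENNReal.ofReal (gdens x t * f x)) := by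
        refine add_le_add le_rfl ?_
        have hle : ∀ x : ℝ, ENNReal.ofReal ((gdens x t - 1) * f x) ≤
            ENNReal.ofReal (gdens x t * f x) := fun x =>
          ENNReal.ofReal_le_ofReal (mul_le_mul_of_nonneg_right (by linarith) (h0 x))
        calc ∫⁻ x in Set.Ioc t 1, ENNReal.ofReal ((gdens x t - 1) * f x)
            ≤ ∫⁻ x in Set.Ioc t 1, ENNReal.ofReal (gdens x t * f x) :=
              lintegral_mono (fun x => hle x)
          _ ≤ 2 * ∫⁻ x in Set.Ioc t 1, ENNReal.ofReal (gdens x t * f x) := by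
              nth_rewrite 1 [← one_mul (∫⁻ x in Set.Ioc t 1, ENNReal.ofReal (gdens x t * f x))]
              exact mul_le_mul_left one_le_two _
    _ = 2 * (∫⁻ x in Set.Ioc a 1, ENNReal.ofReal (gdens x t * f x)) := by
        rw [← mul_add, ← lintegral_union measurableSet_Ioc (Set.Ioc_disjoint_Ioc_of_le le_rfl),
          Set.Ioc_union_Ioc_eq_Ioc hat ht1]
    _ ≤ 2 * ∫⁻ x in Set.Ioc a 1, ENNReal.ofReal (gdens x t) * ENNReal.ofReal (f x) := by
        rw [two_mul, two_mul]
        exact add_le_add (lintegral_mono (fun x => ofReal_mul_le (h0 x)))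
          (lintegral_mono (fun x => ofReal_mul_le (h0 x)))


/-- `f` is the version of the Lebesgue density of `μ` which vanishes outside `[0,1]` and
satisfies the integral equation
`f(t) = 2·∫_{2√t−1}^{t} g(x,t)·f(x) dx + ∫_{t}^{1} (g(x,t) − 1)·f(x) dx` on `[0,1]`. -/
def IsRDEDensity (μ : Measure ℝ) (f : ℝ → ℝ) : Prop :=
  Measurable f ∧ (∀ t, 0 ≤ f t) ∧
  μ = volume.withDensity (fun t => ENNReal.ofReal (f t)) ∧
  (∀ t : ℝ, t < 0 ∨ 1 < t → f t = 0) ∧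
  ∀ t ∈ Set.Icc (0 : ℝ) 1,
    f t = 2 * (∫ x in (2 * Real.sqrt t - 1)..t, gdens x t * f x)
          + ∫ x in t..(1 : ℝ), (gdens x t - 1) * f x

/-- The version `f` of the density of the RDE solution satisfying the integral equation is
bounded: `sup_{t ∈ ℝ} f(t) ≤ 109`, i.e. `f(t) ≤ 109` for all `t`. -/
theorem rde_density_bounded (μ : Measure ℝ) (hμ : IsRDESolution μ)
    (f : ℝ → ℝ) (hf : IsRDEDensity μ f) :
    ∀ t : ℝ, f t ≤ 109 := by
  obtain ⟨hprob, -⟩ := hμ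
  obtain ⟨hm, h0, hdens, hvan, heq⟩ := hf
  have htot : ∫⁻ x, ENNReal.ofReal (f x) = 1 := by
    have h1 : μ Set.univ = 1 := hprob.measure_univ
    rw [hdens, withDensity_apply _ MeasurableSet.univ, Measure.restrict_univ] at h1
    exact h1
  have star' : ∀ y : ℝ, y ≤ 1 →
      ENNReal.ofReal (f y) ≤ 2 * ∫⁻ x in Set.Ioc (2 * Real.sqrt y - 1) 1,
        ENNReal.ofReal (gdens x y) * ENNReal.ofReal (f x) := by
    intro y hy1
    rcases lt_or_ge y 0 with hy0 | hy0
    · rw [hvan y (Or.inl hy0)]; simp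
    · exact star hm h0 heq hy0 hy1
  intro t
  rcases le_or_gt t 1 with ht1 | ht1
  swap
  · rw [hvan t (Or.inr ht1)]; norm_num
  rcases le_or_gt 0 t with ht0 | ht0
  swap
  · rw [hvan t (Or.inl ht0)]; norm_num
  -- now t ∈ [0,1]
  set Φ : ℝ → ℝ → ℝ≥0∞ := fun y x =>
    (Set.Ioc (2 * Real.sqrt t - 1) 1).indicator
        (fun y' => ENNReal.ofReal (gdens y' t)) y *
      (Set.Ioc (2 * Real.sqrt y - 1) 1).indicator
        (fun x' => ENNReal.ofReal (gdens x' y) * ENNReal.ofReal (f x')) x with hΦ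
  have hGmeas : Measurable (fun p : ℝ × ℝ =>
      ENNReal.ofReal (gdens p.2 p.1) * ENNReal.ofReal (f p.2)) :=
    gdens_meas2.ennreal_ofReal.mul ((hm.comp measurable_snd).ennreal_ofReal)
  have hSmeas : MeasurableSet {p : ℝ × ℝ | 2 * Real.sqrt p.1 - 1 < p.2 ∧ p.2 ≤ 1} := by
    refine MeasurableSet.inter ?_ (measurableSet_le measurable_snd measurable_const)
    exact measurableSet_lt
      (((Real.continuous_sqrt.measurable.comp measurable_fst).const_mul 2).sub
        measurable_const) measurable_snd
  have hind2 : (fun p : ℝ × ℝ =>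
      (Set.Ioc (2 * Real.sqrt p.1 - 1) 1).indicator
        (fun x' => ENNReal.ofReal (gdens x' p.1) * ENNReal.ofReal (f x')) p.2) =
      Set.indicator {p : ℝ × ℝ | 2 * Real.sqrt p.1 - 1 < p.2 ∧ p.2 ≤ 1}
        (fun p => ENNReal.ofReal (gdens p.2 p.1) * ENNReal.ofReal (f p.2)) := by
    funext p
    simp only [Set.indicator_apply, Set.mem_Ioc, Set.mem_setOf_eq]
  have hΦmeas : Measurable (Function.uncurry Φ) := by
    have h2 : Measurable (fun p : ℝ × ℝ =>
        (Set.Ioc (2 * Real.sqrt p.1 - 1) 1).indicator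
          (fun x' => ENNReal.ofReal (gdens x' p.1) * ENNReal.ofReal (f x')) p.2) := by
      rw [hind2]; exact hGmeas.indicator hSmeas
    exact ((((gdens_meas t).ennreal_ofReal.indicator
      measurableSet_Ioc).comp measurable_fst).mul h2)
  have hx2meas : ∀ y : ℝ, Measurable fun x =>
      (Set.Ioc (2 * Real.sqrt y - 1) 1).indicator
        (fun x' => ENNReal.ofReal (gdens x' y) * ENNReal.ofReal (f x')) x := fun y =>
    ((gdens_meas y).ennreal_ofReal.mul hm.ennreal_ofReal).indicator measurableSet_Ioc
  have E1 : ∀ y : ℝ, ∫⁻ x, Φ y x =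
      (Set.Ioc (2 * Real.sqrt t - 1) 1).indicator
        (fun y' => ENNReal.ofReal (gdens y' t) *
          ∫⁻ x in Set.Ioc (2 * Real.sqrt y' - 1) 1,
            ENNReal.ofReal (gdens x y') * ENNReal.ofReal (f x)) y := by
    intro y
    by_cases hy : y ∈ Set.Ioc (2 * Real.sqrt t - 1) 1
    · rw [Set.indicator_of_mem hy]
      calc ∫⁻ x, Φ y x
          = ∫⁻ x, ENNReal.ofReal (gdens y t) *
              (Set.Ioc (2 * Real.sqrt y - 1) 1).indicator
                (fun x' => ENNReal.ofReal (gdens x' y) * ENNReal.ofReal (f x')) x := by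
            refine lintegral_congr fun x => ?_
            rw [hΦ]
            simp only
            rw [Set.indicator_of_mem hy]
        _ = ENNReal.ofReal (gdens y t) * ∫⁻ x,
              (Set.Ioc (2 * Real.sqrt y - 1) 1).indicator
                (fun x' => ENNReal.ofReal (gdens x' y) * ENNReal.ofReal (f x')) x :=
            lintegral_const_mul'' _ (hx2meas y).aemeasurable
        _ = ENNReal.ofReal (gdens y t) *
              ∫⁻ x in Set.Ioc (2 * Real.sqrt y - 1) 1,
                ENNReal.ofReal (gdens x y) * ENNReal.ofReal (f x) := by
            rw [lintegral_indicator measurableSet_Ioc]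
    · rw [Set.indicator_of_notMem hy]
      have hz : ∀ x : ℝ, Φ y x = 0 := by
        intro x
        rw [hΦ]
        simp only
        rw [Set.indicator_of_notMem hy, zero_mul]
      simp only [hz, lintegral_zero]
  have hKmeas : Measurable (fun y => ∫⁻ x in Set.Ioc (2 * Real.sqrt y - 1) 1,
      ENNReal.ofReal (gdens x y) * ENNReal.ofReal (f x)) := by
    have h := Measurable.lintegral_prod_right' (ν := volume) (hGmeas.indicator hSmeas)
    have heq2 : (fun y => ∫⁻ x, Set.indicator
        {p : ℝ × ℝ | 2 * Real.sqrt p.1 - 1 < p.2 ∧ p.2 ≤ 1}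
        (fun p => ENNReal.ofReal (gdens p.2 p.1) * ENNReal.ofReal (f p.2)) (y, x)) =
        (fun y => ∫⁻ x in Set.Ioc (2 * Real.sqrt y - 1) 1,
          ENNReal.ofReal (gdens x y) * ENNReal.ofReal (f x)) := by
      funext y
      rw [← lintegral_indicator measurableSet_Ioc]
      refine lintegral_congr fun x => ?_
      simp only [Set.indicator_apply, Set.mem_Ioc, Set.mem_setOf_eq]
    rwa [heq2] at h
  have step1 : ENNReal.ofReal (f t) ≤ 4 * ∫⁻ y, ∫⁻ x, Φ y x := by
    refine (star hm h0 heq ht0 ht1).trans ?_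
    have h2 : ∫⁻ y in Set.Ioc (2 * Real.sqrt t - 1) 1,
        ENNReal.ofReal (gdens y t) * ENNReal.ofReal (f y) ≤
        ∫⁻ y in Set.Ioc (2 * Real.sqrt t - 1) 1,
          2 * (ENNReal.ofReal (gdens y t) *
            ∫⁻ x in Set.Ioc (2 * Real.sqrt y - 1) 1,
              ENNReal.ofReal (gdens x y) * ENNReal.ofReal (f x)) := by
      refine lintegral_mono_ae ((ae_restrict_mem measurableSet_Ioc).mono fun y hy => ?_)
      calc ENNReal.ofReal (gdens y t) * ENNReal.ofReal (f y)
          ≤ ENNReal.ofReal (gdens y t) *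
            (2 * ∫⁻ x in Set.Ioc (2 * Real.sqrt y - 1) 1,
              ENNReal.ofReal (gdens x y) * ENNReal.ofReal (f x)) :=
            mul_le_mul_right (star' y hy.2) _
        _ = 2 * (ENNReal.ofReal (gdens y t) *
            ∫⁻ x in Set.Ioc (2 * Real.sqrt y - 1) 1,
              ENNReal.ofReal (gdens x y) * ENNReal.ofReal (f x)) := by ring
    calc 2 * ∫⁻ y in Set.Ioc (2 * Real.sqrt t - 1) 1,
          ENNReal.ofReal (gdens y t) * ENNReal.ofReal (f y)
        ≤ 2 * ∫⁻ y in Set.Ioc (2 * Real.sqrt t - 1) 1,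
            2 * (ENNReal.ofReal (gdens y t) *
              ∫⁻ x in Set.Ioc (2 * Real.sqrt y - 1) 1,
                ENNReal.ofReal (gdens x y) * ENNReal.ofReal (f x)) :=
          mul_le_mul_right h2 _
      _ = 4 * ∫⁻ y in Set.Ioc (2 * Real.sqrt t - 1) 1,
            ENNReal.ofReal (gdens y t) *
              ∫⁻ x in Set.Ioc (2 * Real.sqrt y - 1) 1,
                ENNReal.ofReal (gdens x y) * ENNReal.ofReal (f x) := by
          rw [lintegral_const_mul'' 2 (f := fun y => ENNReal.ofReal (gdens y t) *
              ∫⁻ x in Set.Ioc (2 * Real.sqrt y - 1) 1, ENNReal.ofReal (gdens x y) * ENNReal.ofReal (f x))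
            (((gdens_meas t).ennreal_ofReal.mul hKmeas).aemeasurable.restrict), ← mul_assoc]
          norm_num
      _ = 4 * ∫⁻ y, ∫⁻ x, Φ y x := by
          congr 1
          rw [← lintegral_indicator measurableSet_Ioc]
          exact (lintegral_congr E1).symm
  have step2 : ∫⁻ y, ∫⁻ x, Φ y x = ∫⁻ x, ∫⁻ y, Φ y x :=
    lintegral_lintegral_swap hΦmeas.aemeasurable
  have step3 : ∀ x : ℝ, ∫⁻ y, Φ y x ≤ 8 * ENNReal.ofReal (f x) := by
    intro x
    have hpt : ∀ y : ℝ, Φ y x ≤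
        (Set.Ioo (2 * Real.sqrt t - 1) ((1 + x) ^ 2 / 4)).indicator
          (fun y' => ENNReal.ofReal (2 / Real.sqrt (y' - (2 * Real.sqrt t - 1))) *
            ENNReal.ofReal (1 / Real.sqrt ((1 + x) ^ 2 / 4 - y'))) y *
          ENNReal.ofReal (f x) := by
      intro y
      by_cases hy : y ∈ Set.Ioc (2 * Real.sqrt t - 1) 1
      · by_cases hxy : x ∈ Set.Ioc (2 * Real.sqrt y - 1) 1
        · have hΦval : Φ y x = ENNReal.ofReal (gdens y t) *
              (ENNReal.ofReal (gdens x y) * ENNReal.ofReal (f x)) := by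
            rw [hΦ]
            simp only
            rw [Set.indicator_of_mem hy, Set.indicator_of_mem hxy]
          have hyIoo : y ∈ Set.Ioo (2 * Real.sqrt t - 1) ((1 + x) ^ 2 / 4) :=
            ⟨hy.1, lt_b_of hxy.1⟩
          rw [hΦval, Set.indicator_of_mem hyIoo]
          have hb1 : gdens y t ≤ 2 / Real.sqrt (y - (2 * Real.sqrt t - 1)) :=
            gdens_le_main ht0 hy.1 hy.2
          have hxm1 : (-1 : ℝ) ≤ x := by
            have := Real.sqrt_nonneg y; have := hxy.1; linarith
          have hb2 : gdens x y ≤ 1 / Real.sqrt ((1 + x) ^ 2 / 4 - y) :=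
            gdens_le_snd hxy.2 hxm1
          calc ENNReal.ofReal (gdens y t) *
                (ENNReal.ofReal (gdens x y) * ENNReal.ofReal (f x))
              ≤ ENNReal.ofReal (2 / Real.sqrt (y - (2 * Real.sqrt t - 1))) *
                (ENNReal.ofReal (1 / Real.sqrt ((1 + x) ^ 2 / 4 - y)) *
                  ENNReal.ofReal (f x)) :=
                mul_le_mul' (ENNReal.ofReal_le_ofReal hb1)
                  (mul_le_mul_left (ENNReal.ofReal_le_ofReal hb2) _)
            _ = ENNReal.ofReal (2 / Real.sqrt (y - (2 * Real.sqrt t - 1))) *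
                ENNReal.ofReal (1 / Real.sqrt ((1 + x) ^ 2 / 4 - y)) *
                  ENNReal.ofReal (f x) := (mul_assoc _ _ _).symm
        · have hΦval : Φ y x = 0 := by
            rw [hΦ]
            simp only
            rw [Set.indicator_of_notMem hxy, mul_zero]
          rw [hΦval]; exact zero_le
      · have hΦval : Φ y x = 0 := by
          rw [hΦ]
          simp only
          rw [Set.indicator_of_notMem hy, zero_mul]
        rw [hΦval]; exact zero_le
    have hmeas : Measurable fun y =>
        (Set.Ioo (2 * Real.sqrt t - 1) ((1 + x) ^ 2 / 4)).indicator
          (fun y' => ENNReal.ofReal (2 / Real.sqrt (y' - (2 * Real.sqrt t - 1))) *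
            ENNReal.ofReal (1 / Real.sqrt ((1 + x) ^ 2 / 4 - y'))) y := by
      refine Measurable.indicator ?_ measurableSet_Ioo
      exact ((measurable_const.div
          (Real.continuous_sqrt.measurable.comp (by fun_prop))).ennreal_ofReal).mul
        ((measurable_const.div
          (Real.continuous_sqrt.measurable.comp (by fun_prop))).ennreal_ofReal)
    calc ∫⁻ y, Φ y x
        ≤ ∫⁻ y, (Set.Ioo (2 * Real.sqrt t - 1) ((1 + x) ^ 2 / 4)).indicator
            (fun y' => ENNReal.ofReal (2 / Real.sqrt (y' - (2 * Real.sqrt t - 1))) *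
              ENNReal.ofReal (1 / Real.sqrt ((1 + x) ^ 2 / 4 - y'))) y *
            ENNReal.ofReal (f x) := lintegral_mono hpt
      _ = (∫⁻ y, (Set.Ioo (2 * Real.sqrt t - 1) ((1 + x) ^ 2 / 4)).indicator
            (fun y' => ENNReal.ofReal (2 / Real.sqrt (y' - (2 * Real.sqrt t - 1))) *
              ENNReal.ofReal (1 / Real.sqrt ((1 + x) ^ 2 / 4 - y'))) y) *
            ENNReal.ofReal (f x) := lintegral_mul_const'' _ hmeas.aemeasurable
      _ = (∫⁻ y in Set.Ioo (2 * Real.sqrt t - 1) ((1 + x) ^ 2 / 4),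
            ENNReal.ofReal (2 / Real.sqrt (y - (2 * Real.sqrt t - 1))) *
              ENNReal.ofReal (1 / Real.sqrt ((1 + x) ^ 2 / 4 - y))) *
            ENNReal.ofReal (f x) := by rw [lintegral_indicator measurableSet_Ioo]
      _ ≤ 8 * ENNReal.ofReal (f x) :=
          mul_le_mul_left (beta_le_eight (2 * Real.sqrt t - 1) ((1 + x) ^ 2 / 4)) _
  have final : ENNReal.ofReal (f t) ≤ ENNReal.ofReal 109 := by
    calc ENNReal.ofReal (f t) ≤ 4 * ∫⁻ y, ∫⁻ x, Φ y x := step1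
      _ = 4 * ∫⁻ x, ∫⁻ y, Φ y x := by rw [step2]
      _ ≤ 4 * ∫⁻ x, 8 * ENNReal.ofReal (f x) := mul_le_mul_right (lintegral_mono step3) _
      _ = 4 * (8 * 1) := by
          rw [lintegral_const_mul'' 8 hm.ennreal_ofReal.aemeasurable, htot]
      _ ≤ ENNReal.ofReal 109 := by
          rw [ENNReal.ofReal_ofNat]
          norm_num
  exact (ENNReal.ofReal_le_ofReal_iff (by norm_num)).1 final
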